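/- Let k ≥ 1 and l ≥ 0 be integers, let f be a rational function on ℂ, and let M[f] = ∏_{i=0}^{k} (f^{(i)})^{n_i} be a monomial of degree d and weight w (with n_k ≥ 1). If f(z) ≠ 0 for all z ∈ ℂ and f^{(k)}(z) ≠ 0 for all z ∈ ℂ, then for every nonzero constant a ∈ ℂ the function a·M[f](z) − z^l has at least one simple zero in ℂ (a zero of multiplicity exactly 1). -/

import Mathlib

open Filter Set

/-- The differential monomial `M[f] = ∏_{i=0}^k (f^{(i)})^{ν i}`. -/
noncomputable def diffMonomial (k : ℕ) (ν : ℕ → ℕ) (f : ℂ → ℂ) (z : ℂ) : ℂ :=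
  ∏ i ∈ Finset.range (k + 1), (iteratedDeriv i f z) ^ (ν i)

/-- The degree of the monomial with exponents `ν`. -/
def monDegree (k : ℕ) (ν : ℕ → ℕ) : ℕ := ∑ i ∈ Finset.range (k + 1), ν i

/-- The weight of the monomial with exponents `ν`. -/
def monWeight (k : ℕ) (ν : ℕ → ℕ) : ℕ := ∑ i ∈ Finset.range (k + 1), (i + 1) * ν i

open Polynomial


lemma iteratedDeriv_const_succ (k' : ℕ) (c : ℂ) :
    iteratedDeriv (k'+1) (fun _ : ℂ => c) = fun _ => 0 := by
  rw [iteratedDeriv_succ']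
  simp only [deriv_const']
  induction k' with
  | zero => simp [iteratedDeriv_zero]
  | succ n ih =>
    rw [iteratedDeriv_succ',
      show deriv (fun _ : ℂ => (0:ℂ)) = fun _ => 0 from funext (fun x => deriv_const x 0)]
    exact ih

lemma iterDeriv_congr {U : Set ℂ} (hU : IsOpen U) {f g : ℂ → ℂ}
    (h : Set.EqOn f g U) (j : ℕ) : Set.EqOn (iteratedDeriv j f) (iteratedDeriv j g) U := by
  induction j with
  | zero => simpa using h
  | succ j ih =>
    intro z hz
    rw [iteratedDeriv_succ, iteratedDeriv_succ]
    exact Filter.EventuallyEq.deriv_eq (Filter.eventuallyEq_of_mem (hU.mem_nhds hz) ih)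

noncomputable def Nseq (q : Polynomial ℂ) : ℕ → Polynomial ℂ
  | 0 => 1
  | (j+1) => derivative (Nseq q j) * q - C ((j:ℂ)+1) * Nseq q j * derivative q

lemma deriv_pow_mul (b : ℂ) (n : ℕ) (P : Polynomial ℂ) :
    derivative ((X - C b)^n * P) * (X - C b) =
      C (n:ℂ) * (X - C b)^n * P + (X - C b)^(n+1) * derivative P := by
  cases n with
  | zero => simp [derivative_mul]; ring
  | succ n =>
    rw [derivative_mul, derivative_pow]
    simp only [derivative_sub, derivative_X, derivative_C, sub_zero, mul_one,
      Nat.add_sub_cancel, Nat.cast_add, Nat.cast_one]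
    ring

lemma iter_formula (q : Polynomial ℂ) (f : ℂ → ℂ) (c : ℂ)
    (hf : ∀ z, q.eval z ≠ 0 → f z = c / q.eval z) (j : ℕ) :
    ∀ z, q.eval z ≠ 0 → iteratedDeriv j f z = c * (Nseq q j).eval z / (q.eval z)^(j+1) := by
  have hU : IsOpen {z : ℂ | q.eval z ≠ 0} := isOpen_ne.preimage q.continuous
  induction j with
  | zero => intro z hz; simp [Nseq, hf z hz]
  | succ j ih =>
    intro z hz
    rw [iteratedDeriv_succ]
    have hev : iteratedDeriv j f =ᶠ[nhds z]
        (fun w => c * (Nseq q j).eval w / (q.eval w)^(j+1)) :=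
      Filter.eventuallyEq_of_mem (hU.mem_nhds hz) (fun w hw => ih w hw)
    rw [hev.deriv_eq]
    have h1 : HasDerivAt (fun w => (Nseq q j).eval w) ((derivative (Nseq q j)).eval z) z :=
      (Nseq q j).hasDerivAt z
    have h2 : HasDerivAt (fun w => (q.eval w)^(j+1))
        (((j:ℂ)+1) * (q.eval z)^j * (derivative q).eval z) z := by
      have := (q.hasDerivAt z).fun_pow (j+1)
      simpa using this
    have hdiv := (h1.const_mul c).fun_div h2 (pow_ne_zero _ hz)
    rw [hdiv.deriv]
    rw [show Nseq q (j+1) = derivative (Nseq q j) * q - C ((j:ℂ)+1) * Nseq q j * derivative q from rfl]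
    simp only [eval_sub, eval_mul, eval_C]
    field_simp
    ring
lemma Nseq_factor (q Q : Polynomial ℂ) (b : ℂ) (t : ℕ)
    (hq : q = (X - C b)^(t+1) * Q) (hQ : Q.eval b ≠ 0) (j : ℕ) :
    ∃ R : Polynomial ℂ, Nseq q j = (X - C b)^(j*t) * R ∧ R.eval b ≠ 0 := by
  induction j with
  | zero => exact ⟨1, by simp [Nseq], by simp⟩
  | succ j ih =>
    obtain ⟨R, hR, hRb⟩ := ih
    refine ⟨C (((j:ℂ)*t - ((j:ℂ)+1)*((t:ℂ)+1))) * R * Q +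
      (X - C b) * (derivative R * Q - C ((j:ℂ)+1) * R * derivative Q), ?_, ?_⟩
    · have hs : (X - C b : Polynomial ℂ) ≠ 0 := X_sub_C_ne_zero b
      apply mul_left_cancel₀ hs
      have h1 := deriv_pow_mul b (j*t) R
      have h2 := deriv_pow_mul b t Q
      have hNj : Nseq q (j+1) = derivative (Nseq q j) * q - C ((j:ℂ)+1) * Nseq q j * derivative q := rfl
      calc (X - C b) * Nseq q (j+1)
          = (derivative ((X - C b)^(j*t) * R) * (X - C b)) * ((X - C b)^(t+1) * Q)
            - C ((j:ℂ)+1) * ((X - C b)^(j*t) * R) * (derivative ((X - C b)^(t+1) * Q)) * (X - C b) := by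
            rw [hNj, hR, hq]; ring
        _ = (C ((j*t : ℕ):ℂ) * (X - C b)^(j*t) * R + (X - C b)^(j*t+1) * derivative R) * ((X - C b)^(t+1) * Q)
            - C ((j:ℂ)+1) * ((X - C b)^(j*t) * R) *
              (C (((t+1 : ℕ)):ℂ) * (X - C b)^(t+1) * Q + (X - C b)^(t+1+1) * derivative Q) := by
            rw [h1, mul_assoc _ (derivative ((X - C b)^(t+1) * Q)) (X - C b),
              deriv_pow_mul b (t+1) Q]
        _ = (X - C b) * ((X - C b)^((j+1)*t) *
            (C (((j:ℂ)*t - ((j:ℂ)+1)*((t:ℂ)+1))) * R * Q +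
             (X - C b) * (derivative R * Q - C ((j:ℂ)+1) * R * derivative Q))) := by
            have he : (j+1)*t = j*t + t := by ring
            rw [he]
            push_cast
            simp only [map_sub, map_mul, map_add, map_one, map_natCast]
            ring
    · simp only [eval_add, eval_mul, eval_sub, eval_C, eval_X, sub_self, zero_mul, mul_zero,
        add_zero, zero_add]
      have : ((j:ℂ)*t - ((j:ℂ)+1)*((t:ℂ)+1)) = -((j:ℂ)+(t:ℂ)+1) := by ring
      rw [this]
      apply mul_ne_zero (mul_ne_zero ?_ hRb) hQ
      simp only [neg_ne_zero]
      have h2 : ((j+t+1 : ℕ) : ℂ) ≠ 0 := Nat.cast_ne_zero.mpr (Nat.succ_ne_zero _)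
      push_cast at h2
      convert h2 using 1
lemma Nseq_coeff (q : Polynomial ℂ) (t : ℕ) (hq : q.natDegree = t+1) (j : ℕ) :
    (Nseq q j).natDegree ≤ j*t ∧ (Nseq q j).coeff (j*t) ≠ 0 := by
  have hq0 : q ≠ 0 := fun h => by simp [h] at hq
  have hμ : q.coeff (t+1) ≠ 0 := by
    rw [← hq]; exact leadingCoeff_ne_zero.mpr hq0
  induction j with
  | zero => simp [Nseq]
  | succ j ih =>
    obtain ⟨hdeg, hco⟩ := ih
    have hNj : Nseq q (j+1) = derivative (Nseq q j) * q - C ((j:ℂ)+1) * Nseq q j * derivative q := rfl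
    have hdq : (derivative q).natDegree ≤ t := by
      have := natDegree_derivative_le q
      omega
    -- coefficient of term1
    have hterm1 : (derivative (Nseq q j) * q).coeff (j*t + t + 1 - 1) = ((j*t : ℕ) : ℂ) * (Nseq q j).coeff (j*t) * q.coeff (t+1) ∧
        (derivative (Nseq q j) * q).natDegree ≤ (j+1)*t := by
      rcases Nat.eq_zero_or_pos (j*t) with h0 | hpos
      · have : Nseq q j = C ((Nseq q j).coeff 0) :=
          eq_C_of_natDegree_le_zero (by omega)
        rw [this]
        simp [h0]
      · obtain ⟨s, hs⟩ : ∃ s, j*t = s + 1 := ⟨j*t - 1, by omega⟩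
        have hdd : (derivative (Nseq q j)).natDegree ≤ s := by
          have := natDegree_derivative_le (Nseq q j)
          omega
        constructor
        · have : j*t + t + 1 - 1 = s + (t+1) := by omega
          rw [this, coeff_mul_add_eq_of_natDegree_le hdd (le_of_eq hq)]
          rw [coeff_derivative, hs]
          push_cast
          ring
        · calc (derivative (Nseq q j) * q).natDegree ≤ s + (t+1) := by
                apply natDegree_mul_le.trans; omega
            _ ≤ (j+1)*t := by nlinarith [hs]
    -- coefficient of term2
    have hterm2 : (C ((j:ℂ)+1) * Nseq q j * derivative q).coeff (j*t + t) =
        ((j:ℂ)+1) * (Nseq q j).coeff (j*t) * (((t:ℕ)+1 : ℂ) * q.coeff (t+1)) ∧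
        (C ((j:ℂ)+1) * Nseq q j * derivative q).natDegree ≤ (j+1)*t := by
      have hd2 : (C ((j:ℂ)+1) * Nseq q j).natDegree ≤ j*t := by
        have := natDegree_mul_le (p := C ((j:ℂ)+1)) (q := Nseq q j)
        have hC := natDegree_C ((j:ℂ)+1)
        omega
      constructor
      · rw [coeff_mul_add_eq_of_natDegree_le hd2 hdq, coeff_C_mul, coeff_derivative]
        push_cast
        ring
      · apply natDegree_mul_le.trans
        have hidx : (j+1)*t = j*t+t := by ring
        omega
    constructor
    · rw [hNj]
      apply (natDegree_sub_le _ _).trans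
      exact max_le hterm1.2 hterm2.2
    · rw [hNj, coeff_sub, show (j+1)*t = j*t + t from by ring]
      have h1' := hterm1.1
      simp only [Nat.add_sub_cancel] at h1'
      rw [h1', hterm2.1]
      have : ((j*t : ℕ):ℂ) * (Nseq q j).coeff (j*t) * q.coeff (t+1) -
          ((j:ℂ)+1) * (Nseq q j).coeff (j*t) * (((t:ℕ)+1:ℂ) * q.coeff (t+1)) =
          -( ((j:ℂ)+(t:ℂ)+1) * ((Nseq q j).coeff (j*t) * q.coeff (t+1))) := by
        push_cast
        ring
      rw [this]
      simp only [neg_ne_zero]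
      apply mul_ne_zero _ (mul_ne_zero hco hμ)
      have h2 : ((j+t+1 : ℕ) : ℂ) ≠ 0 := Nat.cast_ne_zero.mpr (Nat.succ_ne_zero _)
      push_cast at h2
      convert h2 using 1
lemma simple_root (b C₀ : ℂ) (hC : C₀ ≠ 0) (l m : ℕ) (hm : 2 ≤ m) :
    ∃ z : ℂ, z^l * (z-b)^m = C₀ ∧
      (l:ℂ)*z^(l-1)*(z-b)^m + (m:ℂ)*z^l*(z-b)^(m-1) ≠ 0 := by
  obtain ⟨m', rfl⟩ : ∃ m', m = m' + 1 := ⟨m - 1, by omega⟩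
  rcases Nat.eq_zero_or_pos l with rfl | hl
  · obtain ⟨u, hu⟩ := IsAlgClosed.exists_pow_nat_eq (k := ℂ) C₀ (n := m'+1) (by omega)
    refine ⟨b + u, by simpa using hu, ?_⟩
    have hu0 : u ≠ 0 := by rintro rfl; simp at hu; exact hC hu.symm
    simp only [Nat.cast_zero, zero_mul, pow_zero, zero_add, add_sub_cancel_left, mul_one,
      Nat.add_sub_cancel]
    exact mul_ne_zero (Nat.cast_ne_zero.mpr (by omega)) (pow_ne_zero _ hu0)
  obtain ⟨l', rfl⟩ : ∃ l', l = l' + 1 := ⟨l - 1, by omega⟩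
  by_contra hcon
  push_neg at hcon
  set z₁ : ℂ := ((l'+1 : ℕ) : ℂ) * b / (((l'+1 : ℕ):ℂ) + ((m'+1:ℕ):ℂ)) with hz₁
  have hLM : (((l'+1 : ℕ):ℂ) + ((m'+1:ℕ):ℂ)) ≠ 0 := by
    have h0 : ((l'+1 + (m'+1) : ℕ) : ℂ) ≠ 0 := Nat.cast_ne_zero.mpr (by omega)
    push_cast at h0 ⊢; exact h0
  set h : Polynomial ℂ := X^(l'+1) * (X - C b)^(m'+1) - C C₀ with hh
  have hmonic : (X^(l'+1) * (X - C b)^(m'+1) : Polynomial ℂ).Monic :=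
    (monic_X_pow _).mul ((monic_X_sub_C b).pow _)
  have hdeg : h.natDegree = (l'+1) + (m'+1) := by
    rw [hh, natDegree_sub_C, (monic_X_pow _).natDegree_mul ((monic_X_sub_C b).pow _)]
    simp [natDegree_X_pow, natDegree_pow, natDegree_X_sub_C]
  have hne : h ≠ 0 := by
    intro h0
    rw [h0] at hdeg; simp at hdeg
  -- every root of h is z₁
  have hroot : ∀ x ∈ h.roots, x = z₁ := by
    intro x hx
    have hx0 : h.eval x = 0 := (mem_roots hne).mp hx
    have hxeq : x^(l'+1) * (x - b)^(m'+1) = C₀ := by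
      have h1 := hx0
      simp only [hh, eval_sub, eval_mul, eval_pow, eval_X, eval_C] at h1
      linear_combination h1
    have hxne0 : x ≠ 0 := by
      rintro rfl
      rw [zero_pow (Nat.succ_ne_zero l'), zero_mul] at hxeq
      exact hC hxeq.symm
    have hxneb : x ≠ b := by
      rintro rfl
      rw [sub_self, zero_pow (Nat.succ_ne_zero m'), mul_zero] at hxeq
      exact hC hxeq.symm
    have hD := hcon x hxeq
    simp only [Nat.add_sub_cancel] at hD
    have hfac : x^l' * (x-b)^m' * (((l'+1:ℕ):ℂ)*(x-b) + ((m'+1:ℕ):ℂ)*x) = 0 := by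
      push_cast at hD ⊢
      linear_combination hD
    have h3 : ((l'+1:ℕ):ℂ)*(x-b) + ((m'+1:ℕ):ℂ)*x = 0 := by
      rcases mul_eq_zero.mp hfac with h4 | h4
      · rcases mul_eq_zero.mp h4 with h5 | h5
        · exact absurd ((pow_eq_zero_iff'.mp h5).1) hxne0
        · exact absurd ((pow_eq_zero_iff'.mp h5).1) (sub_ne_zero.mpr hxneb)
      · exact h4
    rw [hz₁, eq_div_iff hLM]
    push_cast at h3 ⊢
    linear_combination h3
  -- h = (X - C z₁) ^ (l'+m'+2)
  have hcard : Multiset.card h.roots = h.natDegree :=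
    splits_iff_card_roots.mp (IsAlgClosed.splits h)
  have hrep : h.roots = Multiset.replicate ((l'+1)+(m'+1)) z₁ := by
    apply Multiset.eq_replicate.mpr
    exact ⟨by rw [hcard, hdeg], hroot⟩
  have hfact : h = (X - C z₁) ^ ((l'+1)+(m'+1)) := by
    have := C_leadingCoeff_mul_prod_multiset_X_sub_C (p := h) (by rw [hcard])
    rw [hrep] at this
    simp only [Multiset.map_replicate, Multiset.prod_replicate] at this
    have hlc : h.leadingCoeff = 1 := by
      have : h.Monic := by
        rw [hh]
        apply hmonic.sub_of_left
        apply lt_of_le_of_lt (degree_C_le)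
        apply natDegree_pos_iff_degree_pos.mp
        rw [(monic_X_pow _).natDegree_mul ((monic_X_sub_C b).pow _)]
        simp only [natDegree_X_pow, natDegree_pow, natDegree_X_sub_C, mul_one]
        omega
      exact this
    rw [hlc, map_one, one_mul] at this
    exact this.symm
  rcases eq_or_ne b 0 with rfl | hb
  · -- z₁ = 0, but h(0) = -C₀ ≠ 0 while (0 - z₁)^N = 0
    have hz10 : z₁ = 0 := by rw [hz₁]; simp
    have h1 : h.eval 0 = -C₀ := by
      simp [hh, zero_pow (Nat.succ_ne_zero l')]
    have h2 : h.eval 0 = 0 := by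
      rw [hfact, hz10]
      simp [zero_pow (show (l'+1)+(m'+1) ≠ 0 by omega)]
    rw [h1] at h2
    exact hC (neg_eq_zero.mp h2)
  · -- evaluate derivative at b
    have hd1 : (derivative h).eval b = 0 := by
      rw [hh]
      simp only [derivative_sub, derivative_C, sub_zero, derivative_mul, derivative_pow,
        derivative_X, derivative_X_pow]
      simp [sub_self, zero_pow (Nat.succ_ne_zero m'), zero_pow (show m' + 1 - 1 ≠ 0 by omega)]
      exact Or.inr (Or.inr (by omega))
    have hd2 : (derivative h).eval b ≠ 0 := by
      rw [hfact, derivative_pow]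
      simp only [derivative_sub, derivative_X, derivative_C, sub_zero, mul_one, eval_mul,
        eval_C, eval_pow, eval_sub, eval_X]
      apply mul_ne_zero
      · exact Nat.cast_ne_zero.mpr (by omega)
      · apply pow_ne_zero
        rw [sub_ne_zero, hz₁]
        intro heq
        rw [eq_comm, div_eq_iff hLM] at heq
        have hzz : ((m'+1:ℕ):ℂ) * b = 0 := by push_cast at heq ⊢; linear_combination - heq
        rcases mul_eq_zero.mp hzz with hc | hc
        · exact (Nat.cast_ne_zero.mpr (Nat.succ_ne_zero m')) hc
        · exact hb hc
    exact hd2 hd1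


theorem stmt2
    (k : ℕ) (hk : 1 ≤ k) (l : ℕ)
    (f : ℂ → ℂ) (p q : Polynomial ℂ) (hq : q ≠ 0) (hpq : IsCoprime p q)
    (hf : ∀ z : ℂ, q.eval z ≠ 0 → f z = p.eval z / q.eval z)
    (ν : ℕ → ℕ) (hνk : 1 ≤ ν k) (d w : ℕ)
    (hd : d = monDegree k ν) (hw : w = monWeight k ν)
    (hf0 : ∀ z : ℂ, q.eval z ≠ 0 → f z ≠ 0)
    (hfk : ∀ z : ℂ, q.eval z ≠ 0 → iteratedDeriv k f z ≠ 0)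
    (a : ℂ) (ha : a ≠ 0) :
    ∃ z₀ : ℂ, q.eval z₀ ≠ 0 ∧
      a * diffMonomial k ν f z₀ - z₀ ^ l = 0 ∧
      deriv (fun z => a * diffMonomial k ν f z - z ^ l) z₀ ≠ 0 := by
  classical
  -- Step 1: p is a nonzero constant c
  have hproot : ∀ z : ℂ, p.eval z ≠ 0 := by
    intro z hz0
    rcases eq_or_ne (q.eval z) 0 with hqz | hqz
    · obtain ⟨u, v, huv⟩ := hpq
      have := congrArg (eval z) huv
      simp [hz0, hqz] at this
    · exact hf0 z hqz (by rw [hf z hqz, hz0, zero_div])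
  have hp0 : p ≠ 0 := fun h => hproot 0 (by simp [h])
  have hpdeg : p.natDegree = 0 := by
    by_contra hdeg
    have : p.degree ≠ 0 := by
      rw [degree_eq_natDegree hp0]
      exact_mod_cast hdeg
    obtain ⟨x, hx⟩ := IsAlgClosed.exists_root p this
    exact hproot x hx
  set c : ℂ := p.coeff 0 with hc
  have hpc : p = Polynomial.C c := eq_C_of_natDegree_le_zero (le_of_eq hpdeg)
  have hcne : c ≠ 0 := by
    have := hproot 0
    rwa [hpc, eval_C] at this
  have hfc : ∀ z : ℂ, q.eval z ≠ 0 → f z = c / q.eval z := by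
    intro z hz
    rw [hf z hz, hpc, eval_C]
  -- Step 2: q is not constant
  have hqdeg : q.natDegree ≠ 0 := by
    intro hq0
    have hqc : q = Polynomial.C (q.coeff 0) := eq_C_of_natDegree_le_zero (le_of_eq hq0)
    have hq0' : q.coeff 0 ≠ 0 := fun h => hq (by rw [hqc, h, map_zero])
    have hqeval : ∀ z : ℂ, eval z q = q.coeff 0 := by
      intro z; nth_rewrite 1 [hqc]; rw [eval_C]
    have hfconst : f = fun _ => c / q.coeff 0 := by
      funext z
      rw [hfc z (by rw [hqeval]; exact hq0'), hqeval]
    obtain ⟨k', rfl⟩ : ∃ k', k = k' + 1 := ⟨k - 1, by omega⟩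
    have hzero : iteratedDeriv (k'+1) f = fun _ => 0 := by
      rw [hfconst]; exact iteratedDeriv_const_succ k' _
    have := hfk 0 (by rw [hqeval]; exact hq0')
    rw [hzero] at this
    exact this rfl
  obtain ⟨t, hqt⟩ : ∃ t, q.natDegree = t + 1 := ⟨q.natDegree - 1, by omega⟩
  -- Step 3: derivative formula
  have hiter := iter_formula q f c hfc
  -- Step 4: roots of Nseq q k are roots of q
  have hNk0 : ∀ z : ℂ, q.eval z ≠ 0 → (Nseq q k).eval z ≠ 0 := by
    intro z hz hNz
    apply hfk z hz
    rw [hiter k z hz, hNz, mul_zero, zero_div]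
  -- Step 5: degrees of Nseq
  have hNdeg : ∀ j, (Nseq q j).natDegree = j * t ∧ Nseq q j ≠ 0 := by
    intro j
    obtain ⟨h1, h2⟩ := Nseq_coeff q t hqt j
    have h3 := le_natDegree_of_ne_zero h2
    exact ⟨le_antisymm h1 h3, fun h => h2 (by rw [h, coeff_zero])⟩
  -- Step 6: for each root b of q, factorization of Nseq
  have hfactor : ∀ b : ℂ, q.IsRoot b → ∀ j,
      ∃ R : Polynomial ℂ, Nseq q j = (X - Polynomial.C b) ^ (j * (rootMultiplicity b q - 1)) * R ∧
        R.eval b ≠ 0 := by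
    intro b hb j
    have hmpos : 0 < rootMultiplicity b q := (rootMultiplicity_pos hq).mpr hb
    obtain ⟨tb, htb⟩ : ∃ tb, rootMultiplicity b q = tb + 1 := ⟨rootMultiplicity b q - 1, by omega⟩
    have hfac := pow_mul_divByMonic_rootMultiplicity_eq q b
    have hQb := eval_divByMonic_pow_rootMultiplicity_ne_zero b hq
    rw [htb] at hfac hQb
    have := Nseq_factor q (q /ₘ (X - Polynomial.C b) ^ (tb+1)) b tb hfac.symm hQb j
    rw [htb]
    simpa using this
  -- Step 7: q has a single root b
  have hNne : Nseq q k ≠ 0 := (hNdeg k).2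
  have hNmult : ∀ b ∈ q.roots.toFinset, rootMultiplicity b (Nseq q k) = k * (rootMultiplicity b q - 1) := by
    intro b hb
    have hbroot : q.IsRoot b := isRoot_of_mem_roots (Multiset.mem_toFinset.mp hb)
    obtain ⟨R, hR, hRb⟩ := hfactor b hbroot k
    rw [hR, rootMultiplicity_mul (hR ▸ hNne), rootMultiplicity_X_sub_C_pow,
      rootMultiplicity_eq_zero hRb, add_zero]
  have hqcard : Multiset.card q.roots = t + 1 := by
    rw [splits_iff_card_roots.mp (IsAlgClosed.splits q), hqt]
  have hNsub : (Nseq q k).roots.toFinset ⊆ q.roots.toFinset := by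
    intro x hx
    rw [Multiset.mem_toFinset] at hx ⊢
    rw [mem_roots hq]
    rw [mem_roots hNne] at hx
    by_contra hcontra
    exact hNk0 x (fun h => hcontra h) hx
  have hNcard : Multiset.card (Nseq q k).roots = k * t := by
    rw [splits_iff_card_roots.mp (IsAlgClosed.splits (Nseq q k)), (hNdeg k).1]
  have hcount : k * t = ∑ b ∈ q.roots.toFinset, k * (rootMultiplicity b q - 1) := by
    rw [← hNcard, ← Multiset.toFinset_sum_count_eq]
    rw [Finset.sum_subset hNsub]
    · exact Finset.sum_congr rfl (fun b hb => by rw [count_roots]; exact hNmult b hb)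
    · intro x _ hnx
      rw [count_roots]
      apply rootMultiplicity_eq_zero
      intro hroot
      exact hnx (Multiset.mem_toFinset.mpr ((mem_roots hNne).mpr hroot))
  have hsummult : ∑ b ∈ q.roots.toFinset, rootMultiplicity b q = t + 1 := by
    rw [← hqcard, ← Multiset.toFinset_sum_count_eq]
    exact Finset.sum_congr rfl (fun b _ => (count_roots q).symm)
  have hr1 : q.roots.toFinset.card = 1 := by
    have h1 : k * t = k * ∑ b ∈ q.roots.toFinset, (rootMultiplicity b q - 1) := by
      rw [hcount, Finset.mul_sum]
    have h2 : t = ∑ b ∈ q.roots.toFinset, (rootMultiplicity b q - 1) :=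
      Nat.eq_of_mul_eq_mul_left (by omega) h1
    have h3 : ∑ b ∈ q.roots.toFinset, (rootMultiplicity b q - 1)
        + q.roots.toFinset.card = ∑ b ∈ q.roots.toFinset, rootMultiplicity b q := by
      rw [Finset.card_eq_sum_ones, ← Finset.sum_add_distrib]
      apply Finset.sum_congr rfl
      intro b hb
      have : 0 < rootMultiplicity b q := (rootMultiplicity_pos hq).mpr
        (isRoot_of_mem_roots (Multiset.mem_toFinset.mp hb))
      omega
    omega
  obtain ⟨b, hbset⟩ := Finset.card_eq_one.mp hr1
  -- q = C μ * (X - C b)^(t+1)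
  set μ : ℂ := q.leadingCoeff with hμdef
  have hμ : μ ≠ 0 := leadingCoeff_ne_zero.mpr hq
  have hqrep : q.roots = Multiset.replicate (t+1) b := by
    apply Multiset.eq_replicate.mpr
    refine ⟨hqcard, fun x hx => ?_⟩
    have : x ∈ q.roots.toFinset := Multiset.mem_toFinset.mpr hx
    rw [hbset, Finset.mem_singleton] at this
    exact this
  have hqfact : q = Polynomial.C μ * (X - Polynomial.C b)^(t+1) := by
    have := C_leadingCoeff_mul_prod_multiset_X_sub_C (p := q) (by rw [hqcard, hqt])
    rw [hqrep] at this
    rw [← this, Multiset.map_replicate, Multiset.prod_replicate]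
  have hqeval : ∀ z : ℂ, q.eval z = μ * (z - b)^(t+1) := by
    intro z
    rw [hqfact]
    simp
  have hbmult : rootMultiplicity b q = t + 1 := by
    rw [← count_roots, hqrep, Multiset.count_replicate_self]
  -- Step 8: iterated derivative formula
  have hbroot : q.IsRoot b := by
    rw [IsRoot, hqeval]
    simp
  have hkey : ∀ i : ℕ, ∃ A : ℂ, A ≠ 0 ∧
      ∀ z : ℂ, z ≠ b → iteratedDeriv i f z = A / (z - b)^(t+1+i) := by
    intro i
    obtain ⟨R, hR, hRb⟩ := hfactor b hbroot i
    rw [hbmult] at hR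
    simp only [Nat.add_sub_cancel] at hR
    -- R is a nonzero constant
    have hRne : R ≠ 0 := fun h => hRb (by rw [h, eval_zero])
    have hRdeg : R.natDegree = 0 := by
      have h1 := (hNdeg i).1
      rw [hR, natDegree_mul (pow_ne_zero _ (X_sub_C_ne_zero b)) hRne,
        natDegree_pow, natDegree_X_sub_C, mul_one] at h1
      omega
    have hRC : R = Polynomial.C (R.eval b) := by
      have := eq_C_of_natDegree_le_zero (le_of_eq hRdeg)
      rw [this]
      congr 1
      rw [this, eval_C]
    refine ⟨c * R.eval b / μ^(i+1), ?_, ?_⟩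
    · exact div_ne_zero (mul_ne_zero hcne hRb) (pow_ne_zero _ hμ)
    · intro z hz
      have hzb : z - b ≠ 0 := sub_ne_zero.mpr hz
      have hqz : q.eval z ≠ 0 := by
        rw [hqeval]
        exact mul_ne_zero hμ (pow_ne_zero _ hzb)
      rw [hiter i z hqz, hR, hRC]
      simp only [eval_mul, eval_pow, eval_sub, eval_X, eval_C]
      rw [hqeval, mul_pow, ← pow_mul,
        show (t+1)*(i+1) = i*t + (t+1+i) from by ring, pow_add]
      field_simp
      ring
  -- Step 9: final assembly
  choose A hAne hAval using hkey
  set B : ℂ := ∏ i ∈ Finset.range (k+1), (A i)^(ν i) with hB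
  have hBne : B ≠ 0 := Finset.prod_ne_zero_iff.mpr (fun i _ => pow_ne_zero _ (hAne i))
  set m : ℕ := ∑ i ∈ Finset.range (k+1), (t+1+i) * ν i with hm
  have hm2 : 2 ≤ m := by
    have h1 : (t+1+k) * ν k ≤ m :=
      Finset.single_le_sum (f := fun i => (t+1+i)*ν i) (fun i _ => Nat.zero_le _)
        (Finset.self_mem_range_succ k)
    have h2 : 2 ≤ (t+1+k) * ν k := by
      calc 2 ≤ t+1+k := by omega
        _ = (t+1+k) * 1 := (mul_one _).symm
        _ ≤ (t+1+k) * ν k := Nat.mul_le_mul_left _ hνk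
    omega
  have hMval : ∀ z : ℂ, z ≠ b → diffMonomial k ν f z = B / (z - b)^m := by
    intro z hz
    rw [diffMonomial, hB, hm]
    rw [Finset.prod_congr rfl (fun i _ => by rw [hAval i z hz, div_pow, ← pow_mul])]
    rw [Finset.prod_div_distrib]
    congr 1
    exact Finset.prod_pow_eq_pow_sum _ _ _
  obtain ⟨z₀, hrel, hD⟩ := simple_root b (a*B) (mul_ne_zero ha hBne) l m hm2
  have hz₀b : z₀ ≠ b := by
    rintro rfl
    rw [sub_self, zero_pow (by omega : m ≠ 0), mul_zero] at hrel
    exact (mul_ne_zero ha hBne) hrel.symm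
  have hz₀s : z₀ - b ≠ 0 := sub_ne_zero.mpr hz₀b
  have hqz₀ : q.eval z₀ ≠ 0 := by
    rw [hqeval]; exact mul_ne_zero hμ (pow_ne_zero _ hz₀s)
  refine ⟨z₀, hqz₀, ?_, ?_⟩
  · rw [hMval z₀ hz₀b, sub_eq_zero, mul_div_assoc', div_eq_iff (pow_ne_zero _ hz₀s)]
    linear_combination - hrel
  · have hEq : Set.EqOn (fun z => a * diffMonomial k ν f z - z^l)
        (fun z => a * B * ((z - b)^m)⁻¹ - z^l) {z : ℂ | z ≠ b} := by
      intro z hz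
      simp only
      rw [hMval z hz]
      ring
    have hopen : IsOpen {z : ℂ | z ≠ b} := isOpen_ne
    rw [Filter.EventuallyEq.deriv_eq (Filter.eventuallyEq_of_mem (hopen.mem_nhds hz₀b) hEq)]
    have hs : HasDerivAt (fun z : ℂ => (z - b)^m) ((m:ℂ)*(z₀-b)^(m-1)) z₀ := by
      simpa using ((hasDerivAt_id z₀).sub_const b).fun_pow m
    have hsne : (z₀ - b)^m ≠ 0 := pow_ne_zero _ hz₀s
    have hG := ((hs.fun_inv hsne).const_mul (a*B)).fun_sub (hasDerivAt_pow l z₀)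
    rw [hG.deriv]
    intro heq
    apply hD
    have hsplit : (z₀ - b)^m = (z₀-b)^(m-1) * (z₀-b) := by
      rw [← pow_succ]; congr 1; omega
    have h2 : (z₀-b)^m * ((l:ℂ)*z₀^(l-1)*(z₀-b)^m + (m:ℂ)*z₀^l*(z₀-b)^(m-1)) = 0 := by
      field_simp at heq
      linear_combination ((m:ℂ)*(z₀-b)^(m-1))*hrel - heq
    rcases mul_eq_zero.mp h2 with h3 | h3
    · exact absurd h3 hsne
    · exact h3
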